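/- Let S be a numerical semigroup with Frobenius number F that is not irreducible, and let h = max{x ∈ ℕ \ S | F - x ∉ S and x ≠ F/2}. Then S ∪ {h} is a numerical semigroup with Frobenius number F. -/
import Mathlib


open Set

/-- A numerical semigroup: contains 0, closed under addition, finite complement. -/
def IsNumSgp (S : Set ℕ) : Prop :=
  0 ∈ S ∧ (∀ a ∈ S, ∀ b ∈ S, a + b ∈ S) ∧ (Sᶜ : Set ℕ).Finite

/-- The multiplicity: least positive element. -/
noncomputable def mult (S : Set ℕ) : ℕ := sInf {n | n ∈ S ∧ n ≠ 0}

/-- next_S(s) = min { x ∈ S | s < x }. -/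
noncomputable def nextS (S : Set ℕ) (s : ℕ) : ℕ := sInf {x | x ∈ S ∧ s < x}

/-- The concentration C(S) = max { next_S(s) - s | s ∈ S \ {0} }. -/
noncomputable def conc (S : Set ℕ) : ℕ :=
  sSup {d | ∃ s ∈ S, s ≠ 0 ∧ d = nextS S s - s}

/-- The Frobenius number: largest gap. -/
noncomputable def frob (S : Set ℕ) : ℕ := sSup (Sᶜ : Set ℕ)

/-- The genus: number of gaps. -/
noncomputable def genus (S : Set ℕ) : ℕ := (Sᶜ : Set ℕ).ncard

/-- x is a minimal generator of S. -/
def IsMinGen (S : Set ℕ) (x : ℕ) : Prop :=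
  x ∈ S ∧ x ≠ 0 ∧ ¬∃ a ∈ S, ∃ b ∈ S, a ≠ 0 ∧ b ≠ 0 ∧ a + b = x

/-- The embedding dimension: number of minimal generators. -/
noncomputable def edim (S : Set ℕ) : ℕ := {x | IsMinGen S x}.ncard

/-- n(S): the number of elements of S smaller than the Frobenius number. -/
noncomputable def nS (S : Set ℕ) : ℕ := {s | s ∈ S ∧ s < frob S}.ncard

/-- The half-line Δ(m) = {0} ∪ {m, m+1, ...}. -/
def Delta (m : ℕ) : Set ℕ := {0} ∪ {n | m ≤ n}

def IsHalfLine (S : Set ℕ) : Prop := ∃ m, S = Delta m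

/-- An irreducible numerical semigroup. -/
def Irred (S : Set ℕ) : Prop :=
  ¬∃ T₁ T₂ : Set ℕ, IsNumSgp T₁ ∧ IsNumSgp T₂ ∧ S ⊂ T₁ ∧ S ⊂ T₂ ∧ S = T₁ ∩ T₂

theorem stmt16 (S : Set ℕ) (F h : ℕ) (hS : IsNumSgp S) (hF : frob S = F)
    (hirr : ¬Irred S)
    (hh : h = sSup {x : ℕ | x ∉ S ∧ F - x ∉ S ∧ 2 * x ≠ F}) :
    IsNumSgp (S ∪ {h}) ∧ frob (S ∪ {h}) = F := by
  obtain ⟨h0, hadd, hfin⟩ := hS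
  -- the complement is nonempty
  have hScne : (Sᶜ : Set ℕ).Nonempty := by
    by_contra hne
    rw [Set.not_nonempty_iff_eq_empty, Set.compl_empty_iff] at hne
    exact hirr fun ⟨T₁, T₂, _, _, hs₁, _, _⟩ =>
      hs₁.2 (hne ▸ fun x _ => Set.mem_univ x)
  have hbdd : BddAbove (Sᶜ : Set ℕ) := hfin.bddAbove
  have hFnS : F ∉ S := hF ▸ (Set.Nonempty.csSup_mem hScne hfin : sSup (Sᶜ : Set ℕ) ∈ Sᶜ)
  have gap_le : ∀ x, x ∉ S → x ≤ F := fun x hx => hF ▸ le_csSup hbdd hx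
  set X : Set ℕ := {x : ℕ | x ∉ S ∧ F - x ∉ S ∧ 2 * x ≠ F} with hX
  have hXne : X.Nonempty := by
    by_contra hne
    rw [Set.not_nonempty_iff_eq_empty] at hne
    apply hirr
    rintro ⟨T₁, T₂, hT₁, hT₂, hs₁, hs₂, hint⟩
    have key : ∀ T : Set ℕ, IsNumSgp T → S ⊂ T → F ∈ T := by
      intro T hT hsub
      obtain ⟨x, hxT, hxS⟩ := Set.exists_of_ssubset hsub
      have hxX : x ∉ X := hne ▸ Set.notMem_empty x
      simp only [hX, Set.mem_setOf_eq, not_and, not_not] at hxX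
      rcases Classical.em (F - x ∈ S) with hc | hc
      · have : x + (F - x) = F := by
          have := gap_le x hxS; omega
        exact this ▸ hT.2.1 x hxT (F - x) (hsub.1 hc)
      · have h2 : 2 * x = F := by tauto
        have : x + x = F := by omega
        exact this ▸ hT.2.1 x hxT x hxT
    exact hFnS (hint ▸ Set.mem_inter (key T₁ hT₁ hs₁) (key T₂ hT₂ hs₂))
  have hXfin : X.Finite := hfin.subset fun x hx => hx.1
  have hhX : h ∈ X := hh ▸ Set.Nonempty.csSup_mem hXne hXfin
  have hmax : ∀ x ∈ X, x ≤ h := fun x hx => hh ▸ le_csSup hXfin.bddAbove hx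
  obtain ⟨hhnS, hFh, h2h⟩ := hhX
  have hne0 : h ≠ 0 := fun e => hhnS (e ▸ h0)
  have hhF : h ≠ F := fun e => hFh (by rw [e, Nat.sub_self]; exact h0)
  have hhleF : h ≤ F := gap_le h hhnS
  -- key lemma: s + h ∈ S for nonzero s ∈ S
  have key_add : ∀ a ∈ S, a ≠ 0 → a + h ∈ S := by
    intro a haS ha0
    by_contra hnot
    have hle : a + h ≤ F := gap_le _ hnot
    have c2 : F - (a + h) ∉ S := by
      intro hc
      have hne' : F - (a + h) + a = F - h := by omega
      exact hFh (hne' ▸ hadd _ hc _ haS)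
    have c3 : 2 * (a + h) ≠ F := by
      intro hc
      have hy : 2 * a + h ∈ X := by
        refine ⟨?_, ?_, ?_⟩
        · have : 2 * a + h = F - h := by omega
          exact this ▸ hFh
        · show F - (2 * a + h) ∉ S
          have : F - (2 * a + h) = h := by omega
          rw [this]; exact hhnS
        · omega
      have := hmax _ hy
      omega
    have : a + h ≤ h := hmax _ ⟨hnot, c2, c3⟩
    omega
  -- h + h ∈ S
  have key2 : h + h ∈ S := by
    by_contra h2
    have hle : h + h ≤ F := gap_le _ h2
    have c2 : F - (h + h) ∉ S := by
      intro hc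
      have hc0 : F - (h + h) ≠ 0 := by omega
      have := key_add _ hc hc0
      have he : F - (h + h) + h = F - h := by omega
      exact hFh (he ▸ this)
    have c3 : 2 * (h + h) = F := by
      by_contra c3
      have := hmax _ ⟨h2, c2, c3⟩
      omega
    have hy : 3 * h ∈ X := by
      refine ⟨?_, ?_, ?_⟩
      · have : 3 * h = F - h := by omega
        exact this ▸ hFh
      · show F - 3 * h ∉ S
        have : F - 3 * h = h := by omega
        rw [this]; exact hhnS
      · omega
    have := hmax _ hy
    omega
  have hTsgp : IsNumSgp (S ∪ {h}) := by
    refine ⟨Or.inl h0, ?_, ?_⟩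
    · rintro a (haS | haH) b (hbS | hbH)
      · exact Or.inl (hadd a haS b hbS)
      · rcases Classical.em (a = 0) with h' | h'
        · simp only [Set.mem_singleton_iff] at hbH
          subst h'; simp [hbH]
        · exact Or.inl (Set.mem_singleton_iff.mp hbH ▸ key_add a haS h')
      · rcases Classical.em (b = 0) with h' | h'
        · simp only [Set.mem_singleton_iff] at haH
          subst h'; simp [haH]
        · exact Or.inl (by
            rw [Set.mem_singleton_iff.mp haH, Nat.add_comm]
            exact key_add b hbS h')
      · simp only [Set.mem_singleton_iff] at haH hbH
        exact Or.inl (haH ▸ hbH ▸ key2)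
    · exact hfin.subset (by rw [Set.compl_union]; exact Set.inter_subset_left)
  refine ⟨hTsgp, ?_⟩
  have hFmem : F ∈ ((S ∪ {h})ᶜ : Set ℕ) := by
    simp only [Set.mem_compl_iff, Set.mem_union, Set.mem_singleton_iff]
    push_neg
    exact ⟨hFnS, Ne.symm hhF⟩
  refine le_antisymm ?_ ?_
  · exact csSup_le ⟨F, hFmem⟩ fun x hx => gap_le x fun hxS => hx (Or.inl hxS)
  · exact le_csSup hTsgp.2.2.bddAbove hFmem
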